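/- Let M = (S, A, AP, L, I) be an interval Markov decision process and let s, t ∈ S with s ∼∀ t. Then for every PCTL state formula φ, s ⊨∀ φ if and only if t ⊨∀ φ. -/

import Mathlib

open scoped Classical
open MeasureTheory

structure IMDP (S A AP : Type) [Fintype S] [Fintype A] : Type where
  L : S → Set AP
  Il : S → A → S → ℝ
  Iu : S → A → S → ℝ
  Il_nonneg : ∀ s a s', 0 ≤ Il s a s'
  Il_le_Iu : ∀ s a s', Il s a s' ≤ Iu s a s'
  Iu_le_one : ∀ s a s', Iu s a s' ≤ 1
  feasible_nonempty : ∀ s a, ∃ μ : S → ℝ,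
    (∀ s', 0 ≤ μ s') ∧ (∑ s', μ s') = 1 ∧
      ∀ s', μ s' ∈ Set.Icc (Il s a s') (Iu s a s')

def IsDist {X : Type} [Fintype X] (μ : X → ℝ) : Prop :=
  (∀ x, 0 ≤ μ x) ∧ (∑ x, μ x) = 1

def Feasible {S A AP : Type} [Fintype S] [Fintype A] (M : IMDP S A AP)
    (s : S) (a : A) (μ : S → ℝ) : Prop :=
  IsDist μ ∧ ∀ s', μ s' ∈ Set.Icc (M.Il s a s') (M.Iu s a s')

noncomputable def classMass {S : Type} [Fintype S] (R : S → S → Prop)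
    (μ : S → ℝ) (c : S) : ℝ :=
  ∑ s', if R c s' then μ s' else 0

def StepTo {S A AP : Type} [Fintype S] [Fintype A] (M : IMDP S A AP)
    (s : S) (μ : S → ℝ) : Prop :=
  μ ∈ convexHull ℝ (⋃ a : A, {ν : S → ℝ | Feasible M s a ν})

def IsForallBisim {S A AP : Type} [Fintype S] [Fintype A] (M : IMDP S A AP)
    (R : S → S → Prop) : Prop :=
  Equivalence R ∧ ∀ s t : S, R s t → M.L s = M.L t ∧
    ∀ μ : S → ℝ, StepTo M s μ →
      ∃ ν : S → ℝ, StepTo M t ν ∧ ∀ c : S, classMass R μ c = classMass R ν c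

def SimForall {S A AP : Type} [Fintype S] [Fintype A] (M : IMDP S A AP)
    (s t : S) : Prop :=
  ∃ R : S → S → Prop, IsForallBisim M R ∧ R s t

inductive Cmp : Type where
  | le : Cmp
  | lt : Cmp
  | ge : Cmp
  | gt : Cmp

def Cmp.eval : Cmp → ℝ → ℝ → Prop
  | Cmp.le, x, y => x ≤ y
  | Cmp.lt, x, y => x < y
  | Cmp.ge, x, y => y ≤ x
  | Cmp.gt, x, y => y < x

mutual
  inductive StateFormula (AP : Type) : Type where
    | tt : StateFormula AP
    | atom : AP → StateFormula AP
    | neg : StateFormula AP → StateFormula AP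
    | conj : StateFormula AP → StateFormula AP → StateFormula AP
    | prob : Cmp → (p : ℚ) → 0 ≤ p → p ≤ 1 → PathFormula AP → StateFormula AP
  inductive PathFormula (AP : Type) : Type where
    | next : StateFormula AP → PathFormula AP
    | untl : StateFormula AP → StateFormula AP → PathFormula AP
    | buntl : ℕ → StateFormula AP → StateFormula AP → PathFormula AP
end

abbrev FinPath (S : Type) : Type := {l : List S // l ≠ []}

structure Scheduler (S A : Type) [Fintype A] : Type where
  f : FinPath S → A → ℝ
  dist : ∀ ω : FinPath S, IsDist (f ω)

structure Nature {S A AP : Type} [Fintype S] [Fintype A] (M : IMDP S A AP) : Type where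
  f : FinPath S → A → S → ℝ
  feasible : ∀ (ω : FinPath S) (a : A), Feasible M (ω.1.getLast ω.2) a (f ω a)

def Cyl {S : Type} (l : List S) : Set (ℕ → S) :=
  {ρ | ∀ i : Fin l.length, ρ (i : ℕ) = l.get i}

def pathSigma (S : Type) : MeasurableSpace (ℕ → S) :=
  MeasurableSpace.generateFrom {C : Set (ℕ → S) | ∃ l : List S, l ≠ [] ∧ C = Cyl l}

def IsPathMeasure {S A AP : Type} [Fintype S] [Fintype A] (M : IMDP S A AP)
    (s : S) (σ : Scheduler S A) (π : Nature M)
    (Pr : @Measure (ℕ → S) (pathSigma S)) : Prop :=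
  IsProbabilityMeasure Pr ∧
  (∀ s' : S, Pr (Cyl [s']) = if s' = s then 1 else 0) ∧
  ∀ (l : List S) (h : l ≠ []) (s' : S),
    Pr (Cyl (l ++ [s'])) = Pr (Cyl l) *
      ENNReal.ofReal (∑ a, σ.f ⟨l, h⟩ a * π.f ⟨l, h⟩ a s')

mutual
  def SatA {S A AP : Type} [Fintype S] [Fintype A] (M : IMDP S A AP)
      (Pr : S → Scheduler S A → Nature M → @Measure (ℕ → S) (pathSigma S)) :
      StateFormula AP → S → Prop
    | StateFormula.tt, _ => True
    | StateFormula.atom x, s => x ∈ M.L s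
    | StateFormula.neg φ, s => ¬ SatA M Pr φ s
    | StateFormula.conj φ₁ φ₂, s => SatA M Pr φ₁ s ∧ SatA M Pr φ₂ s
    | StateFormula.prob c p _ _ ψ, s =>
        ∀ (σ : Scheduler S A) (π : Nature M),
          Cmp.eval c ((Pr s σ π {ρ : ℕ → S | PSatA M Pr ψ ρ}).toReal) (p : ℝ)
  def PSatA {S A AP : Type} [Fintype S] [Fintype A] (M : IMDP S A AP)
      (Pr : S → Scheduler S A → Nature M → @Measure (ℕ → S) (pathSigma S)) :
      PathFormula AP → (ℕ → S) → Prop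
    | PathFormula.next φ, ρ => SatA M Pr φ (ρ 1)
    | PathFormula.untl φ₁ φ₂, ρ => ∃ k : ℕ, ∃ i : ℕ, i < k ∧ SatA M Pr φ₂ (ρ i) ∧
        ∀ j : ℕ, j < i → SatA M Pr φ₁ (ρ j)
    | PathFormula.buntl k φ₁ φ₂, ρ => ∃ i : ℕ, i < k ∧ SatA M Pr φ₂ (ρ i) ∧
        ∀ j : ℕ, j < i → SatA M Pr φ₁ (ρ j)
end

section Aux

variable {S A AP : Type} [Fintype S] [Fintype A]

lemma feasible_convex (M : IMDP S A AP) (s : S) (a : A) :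
    Convex ℝ {ν : S → ℝ | Feasible M s a ν} := by
  rintro x ⟨⟨hx0, hx1⟩, hxI⟩ y ⟨⟨hy0, hy1⟩, hyI⟩ p q hp hq hpq
  have hIl : ∀ u, M.Il s a u = p * M.Il s a u + q * M.Il s a u := by
    intro u; rw [← add_mul, hpq, one_mul]
  have hIu : ∀ u, M.Iu s a u = p * M.Iu s a u + q * M.Iu s a u := by
    intro u; rw [← add_mul, hpq, one_mul]
  refine ⟨⟨fun u => ?_, ?_⟩, fun u => ⟨?_, ?_⟩⟩
  · simp only [Pi.add_apply, Pi.smul_apply, smul_eq_mul]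
    have := mul_nonneg hp (hx0 u); have := mul_nonneg hq (hy0 u); linarith
  · simp only [Pi.add_apply, Pi.smul_apply, smul_eq_mul]
    rw [Finset.sum_add_distrib, ← Finset.mul_sum, ← Finset.mul_sum, hx1, hy1]
    simpa using hpq
  · simp only [Pi.add_apply, Pi.smul_apply, smul_eq_mul]
    have h1 := mul_le_mul_of_nonneg_left (hxI u).1 hp
    have h2 := mul_le_mul_of_nonneg_left (hyI u).1 hq
    rw [hIl u]; exact add_le_add h1 h2
  · simp only [Pi.add_apply, Pi.smul_apply, smul_eq_mul]
    have h1 := mul_le_mul_of_nonneg_left (hxI u).2 hp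
    have h2 := mul_le_mul_of_nonneg_left (hyI u).2 hq
    rw [hIu u]; exact add_le_add h1 h2

lemma feasible_of_spec (M : IMDP S A AP) (v : S) (a : A) {μ : S → ℝ}
    (h : (∀ s', 0 ≤ μ s') ∧ (∑ s', μ s') = 1 ∧
      ∀ s', μ s' ∈ Set.Icc (M.Il v a s') (M.Iu v a s')) : Feasible M v a μ :=
  ⟨⟨h.1, h.2.1⟩, h.2.2⟩

lemma feasible_stepTo {M : IMDP S A AP} {s : S} {a : A} {ν : S → ℝ}
    (h : Feasible M s a ν) : StepTo M s ν :=
  subset_convexHull ℝ _ (Set.mem_iUnion.2 ⟨a, h⟩)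

lemma stepTo_convex (M : IMDP S A AP) (s : S) :
    Convex ℝ {μ : S → ℝ | StepTo M s μ} :=
  convex_convexHull ℝ _

/-- a default feasible distribution at each state/action -/
noncomputable def dflt0 (M : IMDP S A AP) (v : S) (a : A) : S → ℝ :=
  (M.feasible_nonempty v a).choose

lemma dflt0_feasible (M : IMDP S A AP) (v : S) (a : A) : Feasible M v a (dflt0 M v a) :=
  feasible_of_spec M v a (M.feasible_nonempty v a).choose_spec

/-- decomposition of a StepTo distribution into action weights and feasible dists -/
lemma decomp [Nonempty A] (M : IMDP S A AP) (v : S) (μ : S → ℝ) (h : StepTo M v μ) :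
    ∃ lam : A → ℝ, ∃ nu : A → S → ℝ, IsDist lam ∧ (∀ a, Feasible M v a (nu a)) ∧
      ∀ u, μ u = ∑ a, lam a * nu a u := by
  rw [StepTo, convexHull_eq] at h
  obtain ⟨ι, tset, wgt, z, hw0, hw1, hz, hcm⟩ := h
  have hzA : ∀ i, ∃ a : A, i ∈ tset → Feasible M v a (z i) := by
    intro i
    by_cases hi : i ∈ tset
    · obtain ⟨a, ha⟩ := Set.mem_iUnion.1 (hz i hi)
      exact ⟨a, fun _ => ha⟩
    · exact ⟨Classical.arbitrary A, fun h => absurd h hi⟩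
  choose act hact using hzA
  refine ⟨fun a => ∑ i ∈ tset.filter (fun i => act i = a), wgt i,
    fun a => if 0 < ∑ i ∈ tset.filter (fun i => act i = a), wgt i
      then (tset.filter (fun i => act i = a)).centerMass wgt z else dflt0 M v a,
    ⟨fun a => Finset.sum_nonneg fun i hi => hw0 i (Finset.mem_filter.1 hi).1, ?_⟩,
    fun a => ?_, fun u => ?_⟩
  · rw [Finset.sum_fiberwise_eq_sum_filter tset Finset.univ act wgt]
    simpa using hw1
  · dsimp only
    by_cases hp : 0 < ∑ i ∈ tset.filter (fun i => act i = a), wgt i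
    · rw [if_pos hp]
      refine Convex.centerMass_mem (feasible_convex M v a)
        (fun i hi => hw0 i (Finset.mem_filter.1 hi).1) hp ?_
      intro i hi
      have h1 := Finset.mem_filter.1 hi
      have := hact i h1.1
      rw [h1.2] at this
      exact this
    · rw [if_neg hp]
      exact dflt0_feasible M v a
  · have hmu : μ = ∑ a, (∑ i ∈ tset.filter (fun i => act i = a), wgt i) •
        (if 0 < ∑ i ∈ tset.filter (fun i => act i = a), wgt i
          then (tset.filter (fun i => act i = a)).centerMass wgt z else dflt0 M v a) := by
      rw [← hcm, Finset.centerMass, hw1, inv_one, one_smul]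
      have hsplit : ∑ i ∈ tset, wgt i • z i
          = ∑ a : A, ∑ i ∈ tset.filter (fun i => act i = a), wgt i • z i := by
        rw [Finset.sum_fiberwise_eq_sum_filter tset Finset.univ act (fun i => wgt i • z i)]
        simp
      rw [hsplit]
      refine Finset.sum_congr rfl fun a _ => ?_
      by_cases hp : 0 < ∑ i ∈ tset.filter (fun i => act i = a), wgt i
      · rw [if_pos hp, Finset.centerMass, smul_smul, mul_inv_cancel₀ (ne_of_gt hp), one_smul]
      · have hla : ∑ i ∈ tset.filter (fun i => act i = a), wgt i = 0 :=
          le_antisymm (not_lt.1 hp)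
            (Finset.sum_nonneg fun i hi => hw0 i (Finset.mem_filter.1 hi).1)
        have hz0 : ∀ i ∈ tset.filter (fun i => act i = a), wgt i = 0 :=
          (Finset.sum_eq_zero_iff_of_nonneg
            (fun i hi => hw0 i (Finset.mem_filter.1 hi).1)).1 hla
        rw [Finset.sum_eq_zero fun i hi => by rw [hz0 i hi, zero_smul], hla, zero_smul]
    calc μ u = (∑ a, (∑ i ∈ tset.filter (fun i => act i = a), wgt i) •
        (if 0 < ∑ i ∈ tset.filter (fun i => act i = a), wgt i
          then (tset.filter (fun i => act i = a)).centerMass wgt z else dflt0 M v a)) u := by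
          rw [← hmu]
      _ = _ := by rw [Finset.sum_apply]; exact Finset.sum_congr rfl fun a _ => rfl

end Aux
section PathWeight

variable {S A AP : Type} [Fintype S] [Fintype A]

/-- the one-step probability after history `l` of moving to `u` -/
noncomputable def stepP {M : IMDP S A AP} (σ : Scheduler S A) (π : Nature M)
    (l : List S) (u : S) : ℝ :=
  if h : l ≠ [] then ∑ a, σ.f ⟨l, h⟩ a * π.f ⟨l, h⟩ a u else 0

noncomputable def wrev {M : IMDP S A AP} (x : S) (σ : Scheduler S A) (π : Nature M) :
    List S → ℝ
  | [] => 1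
  | [u] => if u = x then 1 else 0
  | u :: v :: rest => wrev x σ π (v :: rest) * stepP σ π (v :: rest).reverse u

/-- weight of a finite path: product of step probabilities -/
noncomputable def w {M : IMDP S A AP} (x : S) (σ : Scheduler S A) (π : Nature M)
    (l : List S) : ℝ := wrev x σ π l.reverse

lemma w_singleton {M : IMDP S A AP} (x : S) (σ : Scheduler S A) (π : Nature M) (u : S) :
    w x σ π [u] = if u = x then 1 else 0 := rfl

lemma w_append {M : IMDP S A AP} (x : S) (σ : Scheduler S A) (π : Nature M)
    {l : List S} (hl : l ≠ []) (u : S) :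
    w x σ π (l ++ [u]) = w x σ π l * stepP σ π l u := by
  obtain ⟨v, rest, hrev⟩ : ∃ v rest, l.reverse = v :: rest := by
    cases h : l.reverse with
    | nil => exact absurd (List.reverse_eq_nil_iff.1 h) hl
    | cons v rest => exact ⟨v, rest, rfl⟩
  have h2 : (l ++ [u]).reverse = u :: v :: rest := by rw [List.reverse_append, hrev]; rfl
  rw [w, h2, wrev, ← hrev, List.reverse_reverse]
  rfl

lemma stepP_nonneg {M : IMDP S A AP} (σ : Scheduler S A) (π : Nature M)
    (l : List S) (u : S) : 0 ≤ stepP σ π l u := by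
  rw [stepP]
  split
  · exact Finset.sum_nonneg fun a _ => mul_nonneg ((σ.dist _).1 a) (((π.feasible _ a).1).1 u)
  · exact le_rfl

lemma stepP_sum {M : IMDP S A AP} (σ : Scheduler S A) (π : Nature M)
    {l : List S} (hl : l ≠ []) : ∑ u, stepP σ π l u = 1 := by
  simp only [stepP, dif_pos hl]
  rw [Finset.sum_comm]
  have : ∀ a, ∑ u, σ.f ⟨l, hl⟩ a * π.f ⟨l, hl⟩ a u = σ.f ⟨l, hl⟩ a := by
    intro a
    rw [← Finset.mul_sum, ((π.feasible ⟨l, hl⟩ a).1).2, mul_one]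
  rw [Finset.sum_congr rfl fun a _ => this a]
  exact (σ.dist ⟨l, hl⟩).2

lemma w_nonneg {M : IMDP S A AP} (x : S) (σ : Scheduler S A) (π : Nature M)
    (l : List S) : 0 ≤ w x σ π l := by
  induction l using List.reverseRecOn with
  | nil => rw [w]; norm_num [wrev]
  | append_singleton l u ih =>
    rcases eq_or_ne l [] with rfl | hl
    · rw [List.nil_append, w_singleton]; split <;> norm_num
    · rw [w_append x σ π hl u]
      exact mul_nonneg ih (stepP_nonneg σ π l u)

/-- the abstract measure agrees with the weight on cylinders -/
lemma Pr_cyl {M : IMDP S A AP}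
    (Pr : S → Scheduler S A → Nature M → @Measure (ℕ → S) (pathSigma S))
    (hPr : ∀ (s : S) (σ : Scheduler S A) (π : Nature M), IsPathMeasure M s σ π (Pr s σ π))
    (x : S) (σ : Scheduler S A) (π : Nature M) :
    ∀ (l : List S), l ≠ [] → Pr x σ π (Cyl l) = ENNReal.ofReal (w x σ π l) := by
  intro l
  induction l using List.reverseRecOn with
  | nil => intro h; exact absurd rfl h
  | append_singleton l u ih =>
    intro _
    rcases eq_or_ne l [] with rfl | hl
    · rw [List.nil_append, (hPr x σ π).2.1 u, w_singleton]
      split <;> simp_all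
    · rw [(hPr x σ π).2.2 l hl u, ih hl, w_append x σ π hl u,
        ENNReal.ofReal_mul (w_nonneg x σ π l)]
      congr 1
      rw [stepP, dif_pos hl]

lemma cyl_measurable {l : List S} (hl : l ≠ []) :
    MeasurableSet[pathSigma S] (Cyl l) :=
  MeasurableSpace.measurableSet_generateFrom ⟨l, hl, rfl⟩

lemma mem_cyl_ofFn {n : ℕ} (f : Fin n → S) (ρ : ℕ → S) :
    ρ ∈ Cyl (List.ofFn f) ↔ ∀ i : Fin n, ρ (i : ℕ) = f i := by
  constructor
  · intro h i
    have := h (Fin.cast (List.length_ofFn (f := f)).symm i)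
    rwa [List.get_ofFn, Fin.cast_cast, Fin.cast_eq_self] at this
  · intro h i
    rw [List.get_ofFn]
    exact h (Fin.cast (List.length_ofFn (f := f)) i)

lemma cyl_ofFn_disjoint {n : ℕ} {f g : Fin n → S} (hfg : f ≠ g) :
    Disjoint (Cyl (List.ofFn f)) (Cyl (List.ofFn g)) := by
  rw [Set.disjoint_left]
  intro ρ hf hg
  refine hfg (funext fun i => ?_)
  rw [← (mem_cyl_ofFn f ρ).1 hf i, ← (mem_cyl_ofFn g ρ).1 hg i]

/-- measure of a union of depth-(n+1) cylinders -/
lemma Pr_event {M : IMDP S A AP}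
    (Pr : S → Scheduler S A → Nature M → @Measure (ℕ → S) (pathSigma S))
    (hPr : ∀ (s : S) (σ : Scheduler S A) (π : Nature M), IsPathMeasure M s σ π (Pr s σ π))
    (x : S) (σ : Scheduler S A) (π : Nature M) {n : ℕ} (Q : (Fin (n + 1) → S) → Prop) :
    Pr x σ π (⋃ f ∈ Finset.univ.filter Q, Cyl (List.ofFn f)) =
      ENNReal.ofReal (∑ f : Fin (n + 1) → S, if Q f then w x σ π (List.ofFn f) else 0) := by
  have hofn : ∀ f : Fin (n+1) → S, List.ofFn f ≠ [] := by
    intro f h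
    have := congrArg List.length h
    simp at this
  rw [MeasureTheory.measure_biUnion_finset]
  · rw [ENNReal.ofReal_sum_of_nonneg fun f _ => by split <;> first | exact w_nonneg x σ π _ | exact le_rfl]
    rw [Finset.sum_filter]
    refine Finset.sum_congr rfl fun f _ => ?_
    split
    · exact Pr_cyl Pr hPr x σ π _ (hofn f)
    · simp
  · intro f _ g _ hfg
    exact cyl_ofFn_disjoint hfg
  · intro f _
    exact cyl_measurable (hofn f)

end PathWeight
section Transfer

variable {S A AP : Type} [Fintype S] [Fintype A]

lemma ofFn_ne_nil {n : ℕ} (g : Fin (n + 1) → S) : List.ofFn g ≠ [] := by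
  intro h
  have := congrArg List.length h
  simp at this

lemma ofFn_getLast {n : ℕ} (g : Fin (n + 1) → S) (h : List.ofFn g ≠ []) :
    (List.ofFn g).getLast h = g (Fin.last n) := by
  rw [List.getLast_eq_getElem, List.getElem_ofFn]
  congr 1
  ext
  simp

lemma stepP_stepTo {M : IMDP S A AP} (σ : Scheduler S A) (π : Nature M)
    {l : List S} (hl : l ≠ []) :
    StepTo M (l.getLast hl) (fun v => stepP σ π l v) := by
  have : (fun v => stepP σ π l v) = ∑ a, σ.f ⟨l, hl⟩ a • π.f ⟨l, hl⟩ a := by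
    funext v
    rw [Finset.sum_apply]
    simp only [stepP, dif_pos hl, Pi.smul_apply, smul_eq_mul]
  rw [this]
  exact Convex.sum_mem (stepTo_convex M _) (fun a _ => (σ.dist ⟨l, hl⟩).1 a)
    (σ.dist ⟨l, hl⟩).2 (fun a _ => feasible_stepTo (π.feasible ⟨l, hl⟩ a))

noncomputable def dfltS (M : IMDP S A AP) [Nonempty A] (v : S) : S → ℝ :=
  dflt0 M v (Classical.arbitrary A)

lemma dfltS_stepTo (M : IMDP S A AP) [Nonempty A] (v : S) : StepTo M v (dfltS M v) :=
  feasible_stepTo (dflt0_feasible M v _)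

/-- transfer of a StepTo-distribution along the bisimulation -/
noncomputable def nuTr (M : IMDP S A AP) [Nonempty A] (R : S → S → Prop)
    (hR : IsForallBisim M R) (u v : S) (μ : S → ℝ) : S → ℝ :=
  if h : R u v ∧ StepTo M u μ then ((hR.2 u v h.1).2 μ h.2).choose else dfltS M v

lemma nuTr_stepTo (M : IMDP S A AP) [Nonempty A] (R : S → S → Prop)
    (hR : IsForallBisim M R) (u v : S) (μ : S → ℝ) :
    StepTo M v (nuTr M R hR u v μ) := by
  rw [nuTr]
  split
  next h => exact (((hR.2 u v h.1).2 μ h.2).choose_spec).1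
  next => exact dfltS_stepTo M v

lemma nuTr_classMass (M : IMDP S A AP) [Nonempty A] (R : S → S → Prop)
    (hR : IsForallBisim M R) {u v : S} {μ : S → ℝ} (h1 : R u v) (h2 : StepTo M u μ) :
    ∀ c, classMass R μ c = classMass R (nuTr M R hR u v μ) c := by
  rw [nuTr, dif_pos ⟨h1, h2⟩]
  exact (((hR.2 u v h1).2 μ h2).choose_spec).2

lemma classMass_sum {ι : Type*} (R : S → S → Prop) (s : Finset ι)
    (wgt : ι → ℝ) (ν : ι → S → ℝ) (c : S) :
    classMass R (∑ i ∈ s, wgt i • ν i) c = ∑ i ∈ s, wgt i * classMass R (ν i) c := by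
  unfold classMass
  have h1 : ∀ s' : S, (if R c s' then (∑ i ∈ s, wgt i • ν i) s' else 0)
      = ∑ i ∈ s, if R c s' then wgt i * ν i s' else 0 := by
    intro s'
    split
    · rw [Finset.sum_apply]
      exact Finset.sum_congr rfl fun i _ => rfl
    · exact (Finset.sum_eq_zero fun i _ => rfl).symm
  rw [Finset.sum_congr rfl fun s' _ => h1 s', Finset.sum_comm]
  refine Finset.sum_congr rfl fun i _ => ?_
  rw [Finset.mul_sum]
  refine Finset.sum_congr rfl fun s' _ => ?_
  split <;> simp


variable {S' : Type}

/-- total weight of the R-class of a list under the given t-side process -/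
noncomputable def cF (M : IMDP S A AP) (R : S → S → Prop) (σ : Scheduler S A)
    (π : Nature M) (t : S) (n : ℕ) (f : Fin n → S) : ℝ :=
  ∑ g : Fin n → S, if (∀ i, R (f i) (g i)) then w t σ π (List.ofFn g) else 0

lemma cF_nonneg (M : IMDP S A AP) (R : S → S → Prop) (σ : Scheduler S A)
    (π : Nature M) (t : S) (n : ℕ) (f : Fin n → S) : 0 ≤ cF M R σ π t n f :=
  Finset.sum_nonneg fun g _ => by
    split
    · exact w_nonneg t σ π _
    · exact le_rfl

noncomputable def stepD {M : IMDP S A AP} (σ : Scheduler S A) (π : Nature M)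
    {n : ℕ} (g : Fin (n + 1) → S) : S → ℝ :=
  fun v => stepP σ π (List.ofFn g) v

lemma stepD_stepTo (M : IMDP S A AP) (σ : Scheduler S A) (π : Nature M)
    {n : ℕ} (g : Fin (n + 1) → S) :
    StepTo M (g (Fin.last n)) (stepD σ π g) := by
  have := stepP_stepTo (M := M) σ π (ofFn_ne_nil g)
  rwa [ofFn_getLast] at this

/-- the mixed transferred distribution at an s-side history -/
noncomputable def mixF (M : IMDP S A AP) [Nonempty A] (R : S → S → Prop)
    (hR : IsForallBisim M R) (σ : Scheduler S A) (π : Nature M) (t : S)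
    (n : ℕ) (f : Fin (n + 1) → S) : S → ℝ :=
  if 0 < cF M R σ π t (n + 1) f then
    ∑ g : Fin (n + 1) → S,
      (if (∀ i, R (f i) (g i)) then (cF M R σ π t (n + 1) f)⁻¹ * w t σ π (List.ofFn g) else 0) •
        nuTr M R hR (g (Fin.last n)) (f (Fin.last n)) (stepD σ π g)
  else dfltS M (f (Fin.last n))

lemma mix_weight_nonneg (M : IMDP S A AP) (R : S → S → Prop) (σ : Scheduler S A)
    (π : Nature M) (t : S) (n : ℕ) (f g : Fin (n + 1) → S) :
    0 ≤ (if (∀ i, R (f i) (g i)) then (cF M R σ π t (n + 1) f)⁻¹ * w t σ π (List.ofFn g) else 0) := by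
  split
  · exact mul_nonneg (inv_nonneg.2 (cF_nonneg M R σ π t _ f)) (w_nonneg t σ π _)
  · exact le_rfl

lemma mix_weight_sum (M : IMDP S A AP) (R : S → S → Prop) (σ : Scheduler S A)
    (π : Nature M) (t : S) {n : ℕ} (f : Fin (n + 1) → S) (hc : 0 < cF M R σ π t (n + 1) f) :
    ∑ g : Fin (n + 1) → S,
      (if (∀ i, R (f i) (g i)) then (cF M R σ π t (n + 1) f)⁻¹ * w t σ π (List.ofFn g) else 0) = 1 := by
  have : ∀ g : Fin (n+1) → S,
      (if (∀ i, R (f i) (g i)) then (cF M R σ π t (n + 1) f)⁻¹ * w t σ π (List.ofFn g) else 0)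
      = (cF M R σ π t (n + 1) f)⁻¹ * (if (∀ i, R (f i) (g i)) then w t σ π (List.ofFn g) else 0) := by
    intro g; split <;> simp
  rw [Finset.sum_congr rfl fun g _ => this g, ← Finset.mul_sum]
  exact inv_mul_cancel₀ (ne_of_gt hc)

lemma mixF_stepTo (M : IMDP S A AP) [Nonempty A] (R : S → S → Prop)
    (hR : IsForallBisim M R) (σ : Scheduler S A) (π : Nature M) (t : S)
    (n : ℕ) (f : Fin (n + 1) → S) :
    StepTo M (f (Fin.last n)) (mixF M R hR σ π t n f) := by
  rw [mixF]
  split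
  · refine Convex.sum_mem (stepTo_convex M _) (fun g _ => mix_weight_nonneg M R σ π t n f g)
      (mix_weight_sum M R σ π t f (by assumption)) (fun g _ => nuTr_stepTo M R hR _ _ _)
  · exact dfltS_stepTo M _

lemma mixF_congr (M : IMDP S A AP) [Nonempty A] (R : S → S → Prop)
    (hR : IsForallBisim M R) (σ : Scheduler S A) (π : Nature M) (t : S)
    {m n : ℕ} (h : m = n) (f : Fin (m + 1) → S) (g : Fin (n + 1) → S)
    (hfg : ∀ i : Fin (n + 1), f (Fin.cast (by rw [h]) i) = g i) :
    mixF M R hR σ π t m f = mixF M R hR σ π t n g := by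
  subst h
  have : f = g := funext fun i => by simpa using hfg i
  rw [this]

/-- the transferred distribution at an arbitrary finite path -/
noncomputable def mixL (M : IMDP S A AP) [Nonempty A] (R : S → S → Prop)
    (hR : IsForallBisim M R) (σ : Scheduler S A) (π : Nature M) (t : S)
    (ω : FinPath S) : S → ℝ :=
  mixF M R hR σ π t (ω.1.length - 1)
    (fun i => ω.1.get (Fin.cast (Nat.succ_pred_eq_of_pos (List.length_pos_iff.2 ω.2)) i))

lemma mixL_stepTo (M : IMDP S A AP) [Nonempty A] (R : S → S → Prop)
    (hR : IsForallBisim M R) (σ : Scheduler S A) (π : Nature M) (t : S)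
    (ω : FinPath S) : StepTo M (ω.1.getLast ω.2) (mixL M R hR σ π t ω) := by
  have h := mixF_stepTo M R hR σ π t (ω.1.length - 1)
    (fun i => ω.1.get (Fin.cast (Nat.succ_pred_eq_of_pos (List.length_pos_iff.2 ω.2)) i))
  rw [mixL]
  convert h using 2
  rw [List.getLast_eq_getElem]
  simp

noncomputable def lamOf (M : IMDP S A AP) [Nonempty A] (R : S → S → Prop)
    (hR : IsForallBisim M R) (σ : Scheduler S A) (π : Nature M) (t : S)
    (ω : FinPath S) : A → ℝ :=
  (decomp M (ω.1.getLast ω.2) (mixL M R hR σ π t ω) (mixL_stepTo M R hR σ π t ω)).choose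

noncomputable def nuOf (M : IMDP S A AP) [Nonempty A] (R : S → S → Prop)
    (hR : IsForallBisim M R) (σ : Scheduler S A) (π : Nature M) (t : S)
    (ω : FinPath S) : A → S → ℝ :=
  (decomp M (ω.1.getLast ω.2) (mixL M R hR σ π t ω)
    (mixL_stepTo M R hR σ π t ω)).choose_spec.choose

lemma lamnu_spec (M : IMDP S A AP) [Nonempty A] (R : S → S → Prop)
    (hR : IsForallBisim M R) (σ : Scheduler S A) (π : Nature M) (t : S)
    (ω : FinPath S) :
    IsDist (lamOf M R hR σ π t ω) ∧
    (∀ a, Feasible M (ω.1.getLast ω.2) a (nuOf M R hR σ π t ω a)) ∧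
    ∀ u, mixL M R hR σ π t ω u = ∑ a, lamOf M R hR σ π t ω a * nuOf M R hR σ π t ω a u :=
  (decomp M (ω.1.getLast ω.2) (mixL M R hR σ π t ω)
    (mixL_stepTo M R hR σ π t ω)).choose_spec.choose_spec

/-- the transferred scheduler -/
noncomputable def trS (M : IMDP S A AP) [Nonempty A] (R : S → S → Prop)
    (hR : IsForallBisim M R) (σ : Scheduler S A) (π : Nature M) (t : S) : Scheduler S A :=
  ⟨fun ω => lamOf M R hR σ π t ω, fun ω => (lamnu_spec M R hR σ π t ω).1⟩

/-- the transferred nature -/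
noncomputable def trN (M : IMDP S A AP) [Nonempty A] (R : S → S → Prop)
    (hR : IsForallBisim M R) (σ : Scheduler S A) (π : Nature M) (t : S) : Nature M :=
  ⟨fun ω => nuOf M R hR σ π t ω, fun ω a => (lamnu_spec M R hR σ π t ω).2.1 a⟩

lemma trS_step (M : IMDP S A AP) [Nonempty A] (R : S → S → Prop)
    (hR : IsForallBisim M R) (σ : Scheduler S A) (π : Nature M) (t : S)
    {n : ℕ} (g : Fin (n + 1) → S) (u : S) :
    stepP (trS M R hR σ π t) (trN M R hR σ π t) (List.ofFn g) u = mixF M R hR σ π t n g u := by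
  rw [stepP, dif_pos (ofFn_ne_nil g)]
  have h := ((lamnu_spec M R hR σ π t ⟨List.ofFn g, ofFn_ne_nil g⟩).2.2 u).symm
  rw [show (∑ a, (trS M R hR σ π t).f ⟨List.ofFn g, ofFn_ne_nil g⟩ a *
      (trN M R hR σ π t).f ⟨List.ofFn g, ofFn_ne_nil g⟩ a u)
    = ∑ a, lamOf M R hR σ π t ⟨List.ofFn g, ofFn_ne_nil g⟩ a *
        nuOf M R hR σ π t ⟨List.ofFn g, ofFn_ne_nil g⟩ a u from rfl, h]
  rw [mixL]
  refine congrFun (mixF_congr M R hR σ π t ?_ _ g ?_) u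
  · simp
  · intro i
    show (List.ofFn g).get _ = g i
    rw [List.get_ofFn]
    congr 1

end Transfer
section Main

variable {S A AP : Type} [Fintype S] [Fintype A]

lemma w_snoc {M : IMDP S A AP} (x : S) (sch : Scheduler S A) (nat : Nature M)
    {n : ℕ} (g : Fin (n + 1) → S) (u : S) :
    w x sch nat (List.ofFn (Fin.snoc g u)) =
      w x sch nat (List.ofFn g) * stepP sch nat (List.ofFn g) u := by
  have h1 : List.ofFn (Fin.snoc g u) = List.ofFn g ++ [u] := by
    rw [List.ofFn_succ' (Fin.snoc g u), List.concat_eq_append, Fin.snoc_last]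
    congr 2
    exact funext fun i => by simp
  rw [h1, w_append x sch nat (ofFn_ne_nil g) u]

def snocE (n : ℕ) : ((Fin n → S) × S) ≃ (Fin (n + 1) → S) where
  toFun p := Fin.snoc p.1 p.2
  invFun g := (Fin.init g, g (Fin.last n))
  left_inv p := by
    obtain ⟨g, u⟩ := p
    simp [Fin.init_snoc, Fin.snoc_last]
  right_inv g := Fin.snoc_init_self g

lemma rel_snoc (R : S → S → Prop) {n : ℕ} (f : Fin (n + 2) → S)
    (g0 : Fin (n + 1) → S) (u : S) :
    (∀ i, R (f i) ((Fin.snoc g0 u : Fin (n + 2) → S) i)) ↔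
      ((∀ i : Fin (n + 1), R (Fin.init f i) (g0 i)) ∧ R (f (Fin.last (n + 1))) u) := by
  constructor
  · intro h
    refine ⟨fun i => ?_, ?_⟩
    · have := h i.castSucc
      rwa [Fin.snoc_castSucc] at this
    · have := h (Fin.last (n + 1))
      rwa [Fin.snoc_last] at this
  · rintro ⟨h1, h2⟩ i
    induction i using Fin.lastCases with
    | last => rwa [Fin.snoc_last]
    | cast i => rw [Fin.snoc_castSucc]; exact h1 i

lemma sum_snoc_split {M : IMDP S A AP} (R : S → S → Prop) (x : S)
    (sch : Scheduler S A) (nat : Nature M) {n : ℕ} (f : Fin (n + 2) → S) :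
    (∑ g : Fin (n + 2) → S, if (∀ i, R (f i) (g i)) then w x sch nat (List.ofFn g) else 0)
    = ∑ g0 : Fin (n + 1) → S, (if (∀ i : Fin (n + 1), R (Fin.init f i) (g0 i)) then
        w x sch nat (List.ofFn g0) *
          classMass R (fun u => stepP sch nat (List.ofFn g0) u) (f (Fin.last (n + 1)))
      else 0) := by
  rw [← Fintype.sum_equiv (snocE (n + 1))
    (fun p : (Fin (n + 1) → S) × S => if (∀ i, R (f i) ((Fin.snoc p.1 p.2 : Fin (n + 2) → S) i)) then
      w x sch nat (List.ofFn (Fin.snoc p.1 p.2 : Fin (n + 2) → S)) else 0)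
    (fun g => if (∀ i, R (f i) (g i)) then w x sch nat (List.ofFn g) else 0)
    (fun p => rfl)]
  rw [Fintype.sum_prod_type]
  refine Finset.sum_congr rfl fun g0 _ => ?_
  by_cases hP : ∀ i : Fin (n + 1), R (Fin.init f i) (g0 i)
  · rw [if_pos hP]
    have : ∀ u, (if (∀ i, R (f i) (Fin.snoc g0 u i)) then
        w x sch nat (List.ofFn (Fin.snoc g0 u)) else 0)
        = w x sch nat (List.ofFn g0) *
          (if R (f (Fin.last (n + 1))) u then stepP sch nat (List.ofFn g0) u else 0) := by
      intro u
      rw [w_snoc]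
      by_cases hQ : R (f (Fin.last (n + 1))) u
      · rw [if_pos ((rel_snoc R f g0 u).2 ⟨hP, hQ⟩), if_pos hQ]
      · rw [if_neg (fun h => hQ ((rel_snoc R f g0 u).1 h).2), if_neg hQ, mul_zero]
    rw [Finset.sum_congr rfl fun u _ => this u, ← Finset.mul_sum]
    rfl
  · rw [if_neg hP]
    refine Finset.sum_eq_zero fun u _ => ?_
    rw [if_neg (fun h => hP ((rel_snoc R f g0 u).1 h).1)]

lemma cF_congr_rel {M : IMDP S A AP} (R : S → S → Prop) (hE : Equivalence R)
    (σ : Scheduler S A) (π : Nature M) (t : S) {n : ℕ} {f g : Fin n → S}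
    (hfg : ∀ i, R (f i) (g i)) : cF M R σ π t n g = cF M R σ π t n f := by
  refine Finset.sum_congr rfl fun h _ => ?_
  have : (∀ i, R (g i) (h i)) ↔ (∀ i, R (f i) (h i)) :=
    ⟨fun hh i => hE.trans (hfg i) (hh i), fun hh i => hE.trans (hE.symm (hfg i)) (hh i)⟩
  by_cases hc : ∀ i, R (f i) (h i)
  · rw [if_pos hc, if_pos (this.2 hc)]
  · rw [if_neg hc, if_neg (fun hh => hc (this.1 hh))]

/-- the key inductive weight-transfer identity -/
lemma main_transfer (M : IMDP S A AP) [Nonempty A] (R : S → S → Prop)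
    (hR : IsForallBisim M R) (σ : Scheduler S A) (π : Nature M) (s t : S)
    (hst : R s t) : ∀ (n : ℕ) (f : Fin (n + 1) → S),
    (∑ g : Fin (n + 1) → S, if (∀ i, R (f i) (g i)) then
        w s (trS M R hR σ π t) (trN M R hR σ π t) (List.ofFn g) else 0)
      = cF M R σ π t (n + 1) f := by
  have hE := hR.1
  intro n
  induction n with
  | zero =>
    intro f
    have base : ∀ (x : S) (sch : Scheduler S A) (nat : Nature M),
        (∑ g : Fin 1 → S, if (∀ i, R (f i) (g i)) then w x sch nat (List.ofFn g) else 0)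
        = if R (f 0) x then 1 else 0 := by
      intro x sch nat
      rw [Fintype.sum_equiv (Equiv.funUnique (Fin 1) S)
        (fun g => if (∀ i, R (f i) (g i)) then w x sch nat (List.ofFn g) else 0)
        (fun v => if v = x then (if R (f 0) x then 1 else 0) else 0)
        (fun g => by
          have hofn : List.ofFn g = [g 0] := by
            simp [List.ofFn_succ, List.ofFn_zero]
          have hg : (Equiv.funUnique (Fin 1) S) g = g 0 := rfl
          have hiff : (∀ i : Fin (0+1), R (f i) (g i)) ↔ R (f 0) (g 0) :=
            ⟨fun h => h 0, fun h i => by rw [Fin.fin_one_eq_zero i]; exact h⟩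
          rw [hofn, w_singleton, hg, if_congr hiff rfl rfl]
          by_cases hv : g 0 = x
          · subst hv
            simp
          · simp [hv])]
      rw [Finset.sum_ite_eq' Finset.univ x (fun _ => if R (f 0) x then 1 else 0),
        if_pos (Finset.mem_univ x)]
    rw [base s (trS M R hR σ π t) (trN M R hR σ π t), cF, base t σ π]
    have : R (f 0) s ↔ R (f 0) t :=
      ⟨fun h => hE.trans h hst, fun h => hE.trans h (hE.symm hst)⟩
    by_cases h : R (f 0) s
    · rw [if_pos h, if_pos (this.1 h)]
    · rw [if_neg h, if_neg (fun hh => h (this.2 hh))]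
  | succ n IH =>
    intro f
    set σ' := trS M R hR σ π t with hσ'
    set π' := trN M R hR σ π t with hπ'
    set c := f (Fin.last (n + 1)) with hc
    set f0 := Fin.init f with hf0
    rw [sum_snoc_split R s σ' π' f]
    rw [show cF M R σ π t (n + 2) f
      = ∑ g : Fin (n+2) → S, if (∀ i, R (f i) (g i)) then w t σ π (List.ofFn g) else 0 from rfl]
    rw [sum_snoc_split R t σ π f]
    by_cases hcf : 0 < cF M R σ π t (n + 1) f0
    · -- positive-mass case
      set m : ℝ := (cF M R σ π t (n + 1) f0)⁻¹ *
        ∑ h : Fin (n+1) → S, (if (∀ i, R (f0 i) (h i)) then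
          w t σ π (List.ofFn h) *
            classMass R (fun u => stepP σ π (List.ofFn h) u) c else 0) with hm
      have key : ∀ g0 : Fin (n + 1) → S, (∀ i, R (f0 i) (g0 i)) →
          classMass R (fun u => stepP σ' π' (List.ofFn g0) u) c = m := by
        intro g0 hrel
        have hstep : (fun u => stepP σ' π' (List.ofFn g0) u) = mixF M R hR σ π t n g0 :=
          funext fun u => trS_step M R hR σ π t g0 u
        rw [hstep]
        have hcg : cF M R σ π t (n + 1) g0 = cF M R σ π t (n + 1) f0 :=
          cF_congr_rel R hE σ π t hrel
        rw [mixF, if_pos (hcg ▸ hcf), classMass_sum]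
        have hterm : ∀ h : Fin (n+1) → S,
            (if (∀ i, R (g0 i) (h i)) then
              (cF M R σ π t (n + 1) g0)⁻¹ * w t σ π (List.ofFn h) else 0) *
              classMass R (nuTr M R hR (h (Fin.last n)) (g0 (Fin.last n)) (stepD σ π h)) c
            = (cF M R σ π t (n + 1) f0)⁻¹ *
              (if (∀ i, R (f0 i) (h i)) then
                w t σ π (List.ofFn h) *
                  classMass R (fun u => stepP σ π (List.ofFn h) u) c else 0) := by
          intro h
          have hiff : (∀ i, R (g0 i) (h i)) ↔ (∀ i, R (f0 i) (h i)) :=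
            ⟨fun hh i => hE.trans (hrel i) (hh i),
             fun hh i => hE.trans (hE.symm (hrel i)) (hh i)⟩
          by_cases hgh : ∀ i, R (g0 i) (h i)
          · rw [if_pos hgh, if_pos (hiff.1 hgh), hcg]
            have hcm : classMass R (stepD σ π h) c
                = classMass R (nuTr M R hR (h (Fin.last n)) (g0 (Fin.last n)) (stepD σ π h)) c := by
              refine nuTr_classMass M R hR (hE.symm (hgh (Fin.last n))) (stepD_stepTo M σ π h) c
            rw [show classMass R (fun u => stepP σ π (List.ofFn h) u) c
              = classMass R (stepD σ π h) c from rfl, hcm]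
            ring
          · rw [if_neg hgh, if_neg (fun hh => hgh (hiff.2 hh)), zero_mul, mul_zero]
        rw [Finset.sum_congr rfl fun h _ => hterm h, ← Finset.mul_sum, hm]
      have hLHS : ∀ g0 : Fin (n + 1) → S,
          (if (∀ i, R (f0 i) (g0 i)) then
            w s σ' π' (List.ofFn g0) *
              classMass R (fun u => stepP σ' π' (List.ofFn g0) u) c else 0)
          = m * (if (∀ i, R (f0 i) (g0 i)) then w s σ' π' (List.ofFn g0) else 0) := by
        intro g0
        by_cases hg : ∀ i, R (f0 i) (g0 i)
        · rw [if_pos hg, if_pos hg, key g0 hg]; ring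
        · rw [if_neg hg, if_neg hg, mul_zero]
      rw [Finset.sum_congr rfl fun g0 _ => hLHS g0, ← Finset.mul_sum, IH f0, hm]
      rw [mul_comm ((cF M R σ π t (n + 1) f0)⁻¹) _, mul_assoc,
        inv_mul_cancel₀ (ne_of_gt hcf), mul_one]
    · -- zero-mass case
      have hcf0 : cF M R σ π t (n + 1) f0 = 0 :=
        le_antisymm (not_lt.1 hcf) (cF_nonneg M R σ π t _ f0)
      have hT0 : ∀ g0 : Fin (n+1) → S,
          (if (∀ i, R (f0 i) (g0 i)) then w t σ π (List.ofFn g0) else 0) = 0 := by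
        intro g0
        refine (Finset.sum_eq_zero_iff_of_nonneg fun g _ => ?_).1 hcf0 g0 (Finset.mem_univ _)
        split
        · exact w_nonneg t σ π _
        · exact le_rfl
      have hsum0 : (∑ g : Fin (n+1) → S,
          if (∀ i, R (f0 i) (g i)) then w s σ' π' (List.ofFn g) else 0) = 0 := by
        rw [IH f0, hcf0]
      have hS0 : ∀ g0 : Fin (n+1) → S,
          (if (∀ i, R (f0 i) (g0 i)) then w s σ' π' (List.ofFn g0) else 0) = 0 := by
        intro g0
        refine (Finset.sum_eq_zero_iff_of_nonneg fun g _ => ?_).1 hsum0 g0 (Finset.mem_univ _)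
        split
        · exact w_nonneg s σ' π' _
        · exact le_rfl
      rw [Finset.sum_eq_zero, Finset.sum_eq_zero]
      · intro g0 _
        by_cases hg : ∀ i, R (f0 i) (g0 i)
        · have := hT0 g0
          rw [if_pos hg] at this
          rw [if_pos hg, this, zero_mul]
        · rw [if_neg hg]
      · intro g0 _
        by_cases hg : ∀ i, R (f0 i) (g0 i)
        · have := hS0 g0
          rw [if_pos hg] at this
          rw [if_pos hg, this, zero_mul]
        · rw [if_neg hg]

end Main
section Corollaries

variable {S A AP : Type} [Fintype S] [Fintype A]

lemma transfer_sum (M : IMDP S A AP) [Nonempty A] (R : S → S → Prop)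
    (hR : IsForallBisim M R) (σ : Scheduler S A) (π : Nature M) (s t : S)
    (hst : R s t) (n : ℕ) (F : (Fin (n + 1) → S) → ℝ)
    (hF : ∀ f g, (∀ i, R (f i) (g i)) → F f = F g) :
    ∑ f : Fin (n + 1) → S, F f * w s (trS M R hR σ π t) (trN M R hR σ π t) (List.ofFn f)
      = ∑ f : Fin (n + 1) → S, F f * w t σ π (List.ofFn f) := by
  have hE := hR.1
  set N : (Fin (n + 1) → S) → ℝ :=
    fun f => ∑ g : Fin (n + 1) → S, if (∀ i, R (f i) (g i)) then (1 : ℝ) else 0 with hNdef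
  have hN1 : ∀ f, (1 : ℝ) ≤ N f := by
    intro f
    have := Finset.single_le_sum
      (f := fun g : Fin (n + 1) → S => if (∀ i, R (f i) (g i)) then (1 : ℝ) else 0)
      (fun g _ => by split <;> norm_num) (Finset.mem_univ f)
    rwa [if_pos (fun i => hE.refl (f i))] at this
  have hNpos : ∀ f, (0 : ℝ) < N f := fun f => lt_of_lt_of_le one_pos (hN1 f)
  have hNcongr : ∀ f g : Fin (n + 1) → S, (∀ i, R (f i) (g i)) → N f = N g := by
    intro f g hfg
    refine Finset.sum_congr rfl fun h _ => ?_
    have hiff : (∀ i, R (f i) (h i)) ↔ (∀ i, R (g i) (h i)) :=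
      ⟨fun hh i => hE.trans (hE.symm (hfg i)) (hh i), fun hh i => hE.trans (hfg i) (hh i)⟩
    by_cases hc : ∀ i, R (f i) (h i)
    · rw [if_pos hc, if_pos (hiff.1 hc)]
    · rw [if_neg hc, if_neg (fun hh => hc (hiff.2 hh))]
  have claim : ∀ (x : S) (sch : Scheduler S A) (nat : Nature M),
      (∀ f : Fin (n + 1) → S,
        (∑ g : Fin (n + 1) → S, if (∀ i, R (f i) (g i)) then w x sch nat (List.ofFn g) else 0)
          = cF M R σ π t (n + 1) f) →
      ∑ f : Fin (n + 1) → S, F f * w x sch nat (List.ofFn f)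
        = ∑ f : Fin (n + 1) → S, (F f / N f) * cF M R σ π t (n + 1) f := by
    intro x sch nat hmain
    symm
    calc ∑ f : Fin (n + 1) → S, (F f / N f) * cF M R σ π t (n + 1) f
        = ∑ f : Fin (n + 1) → S, ∑ g : Fin (n + 1) → S,
            (if (∀ i, R (f i) (g i)) then (F f / N f) * w x sch nat (List.ofFn g) else 0) := by
          refine Finset.sum_congr rfl fun f _ => ?_
          rw [← hmain f, Finset.mul_sum]
          refine Finset.sum_congr rfl fun g _ => ?_
          split <;> simp
      _ = ∑ g : Fin (n + 1) → S, ∑ f : Fin (n + 1) → S,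
            (if (∀ i, R (f i) (g i)) then (F f / N f) * w x sch nat (List.ofFn g) else 0) :=
          Finset.sum_comm
      _ = ∑ g : Fin (n + 1) → S, F g * w x sch nat (List.ofFn g) := by
          refine Finset.sum_congr rfl fun g _ => ?_
          have h1 : ∀ f : Fin (n + 1) → S,
              (if (∀ i, R (f i) (g i)) then (F f / N f) * w x sch nat (List.ofFn g) else 0)
              = ((F g / N g) * w x sch nat (List.ofFn g)) *
                  (if (∀ i, R (g i) (f i)) then (1 : ℝ) else 0) := by
            intro f
            by_cases hc : ∀ i, R (f i) (g i)
            · rw [if_pos hc, if_pos (fun i => hE.symm (hc i)), hF f g hc, hNcongr f g hc,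
                mul_one]
            · rw [if_neg hc, if_neg (fun hh => hc (fun i => hE.symm (hh i))), mul_zero]
          rw [Finset.sum_congr rfl fun f _ => h1 f, ← Finset.mul_sum]
          rw [show (∑ f : Fin (n + 1) → S, if (∀ i, R (g i) (f i)) then (1 : ℝ) else 0)
            = N g from rfl]
          field_simp
          rw [mul_comm (F g) (N g), mul_assoc, mul_div_cancel_left₀ _ (ne_of_gt (hNpos g))]
  rw [claim s (trS M R hR σ π t) (trN M R hR σ π t)
      (fun f => main_transfer M R hR σ π s t hst n f),
    claim t σ π (fun f => rfl)]

lemma transfer_Pr (M : IMDP S A AP) [Nonempty A] (R : S → S → Prop)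
    (hR : IsForallBisim M R) (σ : Scheduler S A) (π : Nature M) (s t : S) (hst : R s t)
    (Pr : S → Scheduler S A → Nature M → @Measure (ℕ → S) (pathSigma S))
    (hPr : ∀ (x : S) (σ : Scheduler S A) (π : Nature M), IsPathMeasure M x σ π (Pr x σ π))
    (n : ℕ) (Q : (Fin (n + 1) → S) → Prop)
    (hQ : ∀ f g, (∀ i, R (f i) (g i)) → (Q f ↔ Q g)) :
    Pr s (trS M R hR σ π t) (trN M R hR σ π t)
        (⋃ f ∈ Finset.univ.filter Q, Cyl (List.ofFn f))
      = Pr t σ π (⋃ f ∈ Finset.univ.filter Q, Cyl (List.ofFn f)) := by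
  rw [Pr_event Pr hPr s _ _ Q, Pr_event Pr hPr t σ π Q]
  congr 1
  have hs := transfer_sum M R hR σ π s t hst n (fun f => if Q f then (1 : ℝ) else 0)
    (fun f g hfg => by
      by_cases hq : Q f
      · rw [if_pos hq, if_pos ((hQ f g hfg).1 hq)]
      · rw [if_neg hq, if_neg (fun hh => hq ((hQ f g hfg).2 hh))])
  have hrw : ∀ (x : S) (sch : Scheduler S A) (nat : Nature M) (f : Fin (n + 1) → S),
      (if Q f then w x sch nat (List.ofFn f) else 0)
      = (if Q f then (1 : ℝ) else 0) * w x sch nat (List.ofFn f) := by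
    intro x sch nat f
    split <;> simp
  rw [Finset.sum_congr rfl fun f _ => hrw s (trS M R hR σ π t) (trN M R hR σ π t) f,
    Finset.sum_congr rfl fun f _ => hrw t σ π f]
  exact hs

end Corollaries
section Events

variable {S A AP : Type} [Fintype S] [Fintype A]

lemma next_event {M : IMDP S A AP}
    (Pr : S → Scheduler S A → Nature M → @Measure (ℕ → S) (pathSigma S))
    (φ : StateFormula AP) :
    {ρ : ℕ → S | SatA M Pr φ (ρ 1)} =
      ⋃ f ∈ Finset.univ.filter (fun f : Fin (1 + 1) → S => SatA M Pr φ (f 1)),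
        Cyl (List.ofFn f) := by
  ext ρ
  constructor
  · intro h
    refine Set.mem_biUnion (Finset.mem_filter.2 ⟨Finset.mem_univ _, ?_⟩)
      ((mem_cyl_ofFn (fun j : Fin (1 + 1) => ρ (j : ℕ)) ρ).2 fun j => rfl)
    exact h
  · intro h
    obtain ⟨f, hf, hρ⟩ := Set.mem_iUnion₂.1 h
    have hc := (mem_cyl_ofFn f ρ).1 hρ
    have h1 : ρ 1 = f 1 := hc 1
    show SatA M Pr φ (ρ 1)
    rw [h1]
    exact (Finset.mem_filter.1 hf).2

lemma buntl_event {P1 P2 : S → Prop} (m : ℕ) :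
    {ρ : ℕ → S | ∃ i : ℕ, i < m + 1 ∧ P2 (ρ i) ∧ ∀ j : ℕ, j < i → P1 (ρ j)} =
      ⋃ f ∈ Finset.univ.filter (fun f : Fin (m + 1) → S =>
        ∃ i : ℕ, ∃ hi : i < m + 1, P2 (f ⟨i, hi⟩) ∧
          ∀ (j : ℕ) (hj : j < m + 1), j < i → P1 (f ⟨j, hj⟩)), Cyl (List.ofFn f) := by
  ext ρ
  constructor
  · rintro ⟨i, hi, h2, h1⟩
    exact Set.mem_biUnion
      (Finset.mem_filter.2 ⟨Finset.mem_univ _, i, hi, h2, fun j hj hji => h1 j hji⟩)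
      ((mem_cyl_ofFn (fun j : Fin (m + 1) => ρ (j : ℕ)) ρ).2 fun j => rfl)
  · intro h
    obtain ⟨f, hf, hρ⟩ := Set.mem_iUnion₂.1 h
    obtain ⟨i, hi, h2, h1⟩ := (Finset.mem_filter.1 hf).2
    have hc := (mem_cyl_ofFn f ρ).1 hρ
    refine ⟨i, hi, ?_, ?_⟩
    · rw [show ρ i = f ⟨i, hi⟩ from hc ⟨i, hi⟩]
      exact h2
    · intro j hji
      have hjm : j < m + 1 := lt_trans hji hi
      rw [show ρ j = f ⟨j, hjm⟩ from hc ⟨j, hjm⟩]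
      exact h1 j hjm hji

lemma untl_union {P1 P2 : S → Prop} :
    {ρ : ℕ → S | ∃ k : ℕ, ∃ i : ℕ, i < k ∧ P2 (ρ i) ∧ ∀ j : ℕ, j < i → P1 (ρ j)} =
      ⋃ m : ℕ, {ρ : ℕ → S | ∃ i : ℕ, i < m + 1 ∧ P2 (ρ i) ∧ ∀ j : ℕ, j < i → P1 (ρ j)} := by
  ext ρ
  simp only [Set.mem_setOf_eq, Set.mem_iUnion]
  constructor
  · rintro ⟨k, i, hik, h⟩
    exact ⟨i, i, Nat.lt_succ_self i, h⟩
  · rintro ⟨m, i, him, h⟩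
    exact ⟨m + 1, i, him, h⟩

lemma untl_mono {P1 P2 : S → Prop} :
    Monotone (fun m : ℕ =>
      {ρ : ℕ → S | ∃ i : ℕ, i < m + 1 ∧ P2 (ρ i) ∧ ∀ j : ℕ, j < i → P1 (ρ j)}) := by
  intro m m' hmm ρ
  rintro ⟨i, hi, h⟩
  exact ⟨i, lt_of_lt_of_le hi (by omega), h⟩

lemma simForall_symm {M : IMDP S A AP} {u v : S} (h : SimForall M u v) : SimForall M v u := by
  obtain ⟨R, hR, huv⟩ := h
  exact ⟨R, hR, hR.1.symm huv⟩

lemma nonemptyA_of_scheduler (σ : Scheduler S A) (u : S) : Nonempty A := by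
  by_contra hA
  rw [not_nonempty_iff] at hA
  have h1 := (σ.dist ⟨[u], by simp⟩).2
  rw [Finset.univ_eq_empty, Finset.sum_empty] at h1
  exact zero_ne_one h1

end Events
theorem stmt0 {S A AP : Type} [Fintype S] [Fintype A] (M : IMDP S A AP)
    (Pr : S → Scheduler S A → Nature M → @Measure (ℕ → S) (pathSigma S))
    (hPr : ∀ (s : S) (σ : Scheduler S A) (π : Nature M), IsPathMeasure M s σ π (Pr s σ π))
    (s t : S) (hst : SimForall M s t) :
    ∀ φ : StateFormula AP, SatA M Pr φ s ↔ SatA M Pr φ t := by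
  classical
  suffices H : ∀ φ : StateFormula AP, ∀ u v : S, SimForall M u v →
      (SatA M Pr φ u ↔ SatA M Pr φ v) by
    exact fun φ => H φ s t hst
  intro φ
  refine StateFormula.rec
    (motive_1 := fun φ => ∀ u v : S, SimForall M u v → (SatA M Pr φ u ↔ SatA M Pr φ v))
    (motive_2 := fun ψ => ∀ u v : S, SimForall M u v →
      ∀ (σ : Scheduler S A) (π : Nature M),
        ∃ (σ' : Scheduler S A) (π' : Nature M),
          Pr u σ' π' {ρ : ℕ → S | PSatA M Pr ψ ρ} = Pr v σ π {ρ : ℕ → S | PSatA M Pr ψ ρ})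
    ?_ ?_ ?_ ?_ ?_ ?_ ?_ ?_ φ
  · -- tt
    intro u v _; simp [SatA]
  · -- atom
    intro x u v huv
    obtain ⟨R, hR, huv'⟩ := huv
    simp only [SatA]
    rw [(hR.2 u v huv').1]
  · -- neg
    intro φ ih u v huv
    simp only [SatA]
    exact not_congr (ih u v huv)
  · -- conj
    intro φ₁ φ₂ ih₁ ih₂ u v huv
    simp only [SatA]
    exact and_congr (ih₁ u v huv) (ih₂ u v huv)
  · -- prob
    intro c p h0 h1 ψ hψ u v huv
    simp only [SatA]
    constructor
    · intro hu σ π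
      obtain ⟨σ', π', heq⟩ := hψ u v huv σ π
      have := hu σ' π'
      rwa [heq] at this
    · intro hv σ π
      obtain ⟨σ', π', heq⟩ := hψ v u (simForall_symm huv) σ π
      have := hv σ' π'
      rwa [heq] at this
  · -- next
    intro φ ih u v huv σ π
    obtain ⟨R, hR, huv'⟩ := huv
    haveI : Nonempty A := nonemptyA_of_scheduler σ u
    refine ⟨trS M R hR σ π v, trN M R hR σ π v, ?_⟩
    have hE : {ρ : ℕ → S | PSatA M Pr (PathFormula.next φ) ρ}
        = ⋃ f ∈ Finset.univ.filter (fun f : Fin (1 + 1) → S => SatA M Pr φ (f 1)),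
            Cyl (List.ofFn f) := by
      rw [show {ρ : ℕ → S | PSatA M Pr (PathFormula.next φ) ρ}
          = {ρ : ℕ → S | SatA M Pr φ (ρ 1)} from Set.ext fun ρ => by
            simp only [Set.mem_setOf_eq]; rw [PSatA]]
      exact next_event Pr φ
    rw [hE]
    exact transfer_Pr M R hR σ π u v huv' Pr hPr 1 (fun f => SatA M Pr φ (f 1))
      (fun f g hfg => ih (f 1) (g 1) ⟨R, hR, hfg 1⟩)
  · -- untl
    intro φ₁ φ₂ ih₁ ih₂ u v huv σ π
    obtain ⟨R, hR, huv'⟩ := huv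
    haveI : Nonempty A := nonemptyA_of_scheduler σ u
    refine ⟨trS M R hR σ π v, trN M R hR σ π v, ?_⟩
    have hE : {ρ : ℕ → S | PSatA M Pr (PathFormula.untl φ₁ φ₂) ρ}
        = ⋃ m : ℕ, {ρ : ℕ → S | ∃ i : ℕ, i < m + 1 ∧ SatA M Pr φ₂ (ρ i) ∧
            ∀ j : ℕ, j < i → SatA M Pr φ₁ (ρ j)} := by
      rw [show {ρ : ℕ → S | PSatA M Pr (PathFormula.untl φ₁ φ₂) ρ}
          = {ρ : ℕ → S | ∃ k : ℕ, ∃ i : ℕ, i < k ∧ SatA M Pr φ₂ (ρ i) ∧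
              ∀ j : ℕ, j < i → SatA M Pr φ₁ (ρ j)} from Set.ext fun ρ => by
            simp only [Set.mem_setOf_eq]; rw [PSatA]]
      exact untl_union
    rw [hE, Monotone.measure_iUnion untl_mono, Monotone.measure_iUnion untl_mono]
    refine iSup_congr fun m => ?_
    rw [buntl_event m]
    convert transfer_Pr M R hR σ π u v huv' Pr hPr m (fun f => ∃ i : ℕ, ∃ hi : i < m + 1, SatA M Pr φ₂ (f ⟨i, hi⟩) ∧ ∀ (j : ℕ) (hj : j < m + 1), j < i → SatA M Pr φ₁ (f ⟨j, hj⟩)) ?_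
    intro f g hfg
    constructor
    · rintro ⟨i, hi, h2, hj⟩
      exact ⟨i, hi, (ih₂ _ _ ⟨R, hR, hfg _⟩).1 h2,
        fun j hjm hji => (ih₁ _ _ ⟨R, hR, hfg _⟩).1 (hj j hjm hji)⟩
    · rintro ⟨i, hi, h2, hj⟩
      exact ⟨i, hi, (ih₂ _ _ ⟨R, hR, hfg _⟩).2 h2,
        fun j hjm hji => (ih₁ _ _ ⟨R, hR, hfg _⟩).2 (hj j hjm hji)⟩
  · -- buntl
    intro k φ₁ φ₂ ih₁ ih₂ u v huv σ π
    obtain ⟨R, hR, huv'⟩ := huv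
    haveI : Nonempty A := nonemptyA_of_scheduler σ u
    cases k with
    | zero =>
      refine ⟨σ, π, ?_⟩
      have hE : {ρ : ℕ → S | PSatA M Pr (PathFormula.buntl 0 φ₁ φ₂) ρ} = ∅ := by
        ext ρ
        simp only [Set.mem_setOf_eq, Set.mem_empty_iff_false, iff_false]
        rw [PSatA]
        rintro ⟨i, hi, -⟩
        exact Nat.not_lt_zero i hi
      rw [hE, measure_empty, measure_empty]
    | succ m =>
      refine ⟨trS M R hR σ π v, trN M R hR σ π v, ?_⟩
      have hE : {ρ : ℕ → S | PSatA M Pr (PathFormula.buntl (m + 1) φ₁ φ₂) ρ}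
          = {ρ : ℕ → S | ∃ i : ℕ, i < m + 1 ∧ SatA M Pr φ₂ (ρ i) ∧
              ∀ j : ℕ, j < i → SatA M Pr φ₁ (ρ j)} := Set.ext fun ρ => by
        simp only [Set.mem_setOf_eq]; rw [PSatA]
      rw [hE, buntl_event m]
      convert transfer_Pr M R hR σ π u v huv' Pr hPr m (fun f => ∃ i : ℕ, ∃ hi : i < m + 1, SatA M Pr φ₂ (f ⟨i, hi⟩) ∧ ∀ (j : ℕ) (hj : j < m + 1), j < i → SatA M Pr φ₁ (f ⟨j, hj⟩)) ?_
      intro f g hfg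
      constructor
      · rintro ⟨i, hi, h2, hj⟩
        exact ⟨i, hi, (ih₂ _ _ ⟨R, hR, hfg _⟩).1 h2,
          fun j hjm hji => (ih₁ _ _ ⟨R, hR, hfg _⟩).1 (hj j hjm hji)⟩
      · rintro ⟨i, hi, h2, hj⟩
        exact ⟨i, hi, (ih₂ _ _ ⟨R, hR, hfg _⟩).2 h2,
          fun j hjm hji => (ih₁ _ _ ⟨R, hR, hfg _⟩).2 (hj j hjm hji)⟩
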